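/- arXiv:1612.09337 — 7 statements merged into one kernel-verified Lean document; each statement's English description precedes it below -/
import Mathlib

section
/- Let A be an n×n integer matrix and S a nonzero proper linear subspace of ℝ^n invariant under A. If the determinant of the restriction of A to S is a rational number, then it is an integer. -/
open Polynomial Matrix


/-- If `A` is an `n×n` integer matrix, `S` a nonzero proper `A`-invariant subspace of `ℝⁿ`,
and the determinant of the restriction of `A` to `S` is rational, then it is an integer. -/
theorem det_restrict_int_of_rat
    (n : ℕ) (A : Matrix (Fin n) (Fin n) ℤ)
    (S : Submodule ℝ (Fin n → ℝ)) (hS0 : S ≠ ⊥) (hStop : S ≠ ⊤)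
    (hinv : ∀ v ∈ S, Matrix.toLin' (A.map (Int.cast : ℤ → ℝ)) v ∈ S)
    (hQ : ∃ q : ℚ,
      LinearMap.det ((Matrix.toLin' (A.map (Int.cast : ℤ → ℝ))).restrict hinv) = (q : ℝ)) :
    ∃ m : ℤ,
      LinearMap.det ((Matrix.toLin' (A.map (Int.cast : ℤ → ℝ))).restrict hinv) = (m : ℝ) := by
  classical
  obtain ⟨q, hq⟩ := hQ
  set g : (Fin n → ℝ) →ₗ[ℝ] (Fin n → ℝ) := Matrix.toLin' (A.map (Int.cast : ℤ → ℝ)) with hg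
  set f : S →ₗ[ℝ] S := g.restrict hinv with hf
  set p : ℤ[X] := A.charpoly with hp
  have h1 : Polynomial.aeval A p = 0 := A.aeval_self_charpoly
  have hθ : ∀ (B : Matrix (Fin n) (Fin n) ℤ),
      Matrix.toLin' (B.map (Int.cast : ℤ → ℝ)) =
        ((Matrix.toLinAlgEquiv'.toRingHom.comp
          ((Int.castRingHom ℝ).mapMatrix)).toIntAlgHom : Matrix (Fin n) (Fin n) ℤ →ₐ[ℤ] _) B := by
    intro B; rfl
  have h2 : Polynomial.aeval g p = 0 := by
    rw [hg, hθ A, Polynomial.aeval_algHom_apply, h1, map_zero]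
  have h3 : Polynomial.aeval f p = 0 := by
    have key : ∀ (r : ℤ[X]) (s : S), ((Polynomial.aeval f r s : S) : Fin n → ℝ)
        = Polynomial.aeval g r s.val := by
      intro r
      induction r using Polynomial.induction_on' with
      | add a b ha hb => intro s; simp [map_add, ha s, hb s]
      | monomial k a =>
          intro s
          have hpow : ((f ^ k) s : Fin n → ℝ) = (g ^ k) s.val := by
            rw [hf, Module.End.pow_restrict, LinearMap.restrict_apply]
          simp [Polynomial.aeval_monomial, Module.End.mul_apply, algebraMap_int_eq,
            eq_intCast, Module.End.intCast_apply, hpow]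
    apply LinearMap.ext
    intro s
    have := key p s
    rw [h2] at this
    simp only [LinearMap.zero_apply, ZeroMemClass.coe_zero] at this
    apply Subtype.val_injective
    simpa using this
  -- finite dimensionality
  haveI : FiniteDimensional ℝ S := inferInstance
  set d : ℕ := Module.finrank ℝ S with hd
  have hdpos : 0 < d := Module.finrank_pos_iff.mpr (Submodule.nontrivial_iff_ne_bot.mpr hS0)
  let b : Module.Basis (Fin d) ℝ S := Module.finBasis ℝ S
  set M : Matrix (Fin d) (Fin d) ℝ := LinearMap.toMatrixAlgEquiv b f with hM
  have hdetM : M.det = LinearMap.det f := by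
    rw [hM]
    exact LinearMap.det_toMatrix b f
  set Mc : Matrix (Fin d) (Fin d) ℂ := M.map (algebraMap ℝ ℂ) with hMc
  set pR : Polynomial ℝ := p.map (algebraMap ℤ ℝ) with hpR
  have h3R : Polynomial.aeval f pR = 0 := by
    rw [hpR, Polynomial.aeval_map_algebraMap]; exact h3
  set χ : (Module.End ℝ S) →ₐ[ℝ] Matrix (Fin d) (Fin d) ℂ :=
    ((Algebra.ofId ℝ ℂ).mapMatrix).comp (LinearMap.toMatrixAlgEquiv b).toAlgHom with hχ
  have hχf : χ f = Mc := rfl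
  have h4 : Polynomial.aeval Mc (p.map (algebraMap ℤ ℂ)) = 0 := by
    have hcm := Polynomial.aeval_algHom_apply χ f pR
    rw [h3R, map_zero, hχf] at hcm
    rw [Polynomial.aeval_map_algebraMap] at hcm ⊢
    exact hcm
  -- every root of charpoly of Mc is integral over ℤ
  have hroot_int : ∀ z ∈ Mc.charpoly.roots, IsIntegral ℤ z := by
    intro z hz
    have hz' : Mc.charpoly.IsRoot z := isRoot_of_mem_roots hz
    -- z is in the spectrum of Mc
    have hspec : z ∈ spectrum ℂ Mc := by
      rw [spectrum.mem_iff]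
      intro hu
      rw [Matrix.isUnit_iff_isUnit_det] at hu
      have hdet : (algebraMap ℂ (Matrix (Fin d) (Fin d) ℂ) z - Mc).det = 0 := by
        have : Polynomial.eval z Mc.charpoly =
            (algebraMap ℂ (Matrix (Fin d) (Fin d) ℂ) z - Mc).det := by
          rw [Matrix.charpoly, ← Polynomial.coe_evalRingHom, RingHom.map_det]
          congr 1
          ext i j
          by_cases h : i = j <;>
            simp [charmatrix_apply, Matrix.algebraMap_matrix_apply, diagonal_apply, h]
        rw [← this]
        exact hz'
      rw [hdet] at hu
      exact hu.ne_zero rfl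
    -- spectral mapping: eval z pℂ ∈ spectrum of aeval Mc pℂ = 0
    have hmem := spectrum.subset_polynomial_aeval Mc (p.map (algebraMap ℤ ℂ))
      ⟨z, hspec, rfl⟩
    rw [h4] at hmem
    have hz0 : Polynomial.eval z (p.map (algebraMap ℤ ℂ)) = 0 := by
      rcases spectrum.mem_iff.mp hmem with hne
      by_contra h0
      apply hne
      simp only [map_zero, sub_zero]
      exact (IsUnit.map (algebraMap ℂ (Matrix (Fin d) (Fin d) ℂ)) (Ne.isUnit h0))
    refine ⟨p, A.charpoly_monic, ?_⟩
    rw [Polynomial.eval₂_eq_eval_map]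
    exact hz0
  -- det Mc = product of roots
  have hdetMc : Mc.det = Mc.charpoly.roots.prod := Matrix.det_eq_prod_roots_charpoly Mc
  have hint : IsIntegral ℤ (Mc.det) := by
    rw [hdetMc]
    have hmem' : ∀ z ∈ Mc.charpoly.roots, z ∈ integralClosure ℤ ℂ := by
      intro z hz
      rw [mem_integralClosure_iff]
      exact hroot_int z hz
    rw [← mem_integralClosure_iff ℤ ℂ]
    exact multiset_prod_mem _ hmem'
  have hMcdet : Mc.det = ((q : ℂ)) := by
    rw [hMc, ← RingHom.mapMatrix_apply, ← RingHom.map_det, hdetM, hq]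
    simp
  rw [hMcdet] at hint
  have : IsIntegral ℤ (q : ℚ) := by
    have hinj : Function.Injective (algebraMap ℚ ℂ) := (algebraMap ℚ ℂ).injective
    rw [← isIntegral_algebraMap_iff hinj]
    convert hint using 1
    exact eq_ratCast (algebraMap ℚ ℂ) q
  obtain ⟨m, hm⟩ := IsIntegrallyClosed.isIntegral_iff.mp this
  refine ⟨m, ?_⟩
  rw [hq]
  have : (m : ℚ) = q := by exact_mod_cast hm
  exact_mod_cast congrArg (fun x : ℚ => (x : ℝ)) this.symm
end

section
/- Let A be an n×n integer matrix and S a nonzero proper A-invariant subspace of ℝ^n. Then there exists an A-invariant subspace W of ℝ^n such that det(A) = det(A|_S) · det(A|_W). -/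
open Polynomial Module LinearMap

variable {K : Type*} [Field K] {V : Type*} [AddCommGroup V] [Module K V] [FiniteDimensional K V]

/-- Characteristic polynomial multiplicativity along an invariant subspace. -/
theorem charpoly_restrict_mul_mapQ (f : V →ₗ[K] V) (S : Submodule K V)
    (h : ∀ v ∈ S, f v ∈ S) :
    f.charpoly = (f.restrict h).charpoly * (S.mapQ S f h).charpoly := by
  classical
  obtain ⟨T, hcompl⟩ := S.exists_isCompl
  set e := S.prodEquivOfIsCompl T hcompl with he
  set g : (S × T) →ₗ[K] (S × T) := e.symm.conj f with hg
  have hgx : ∀ x, g x = e.symm (f (e x)) := by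
    intro x
    simp [hg, LinearEquiv.conj_apply]
  have hgf : g.charpoly = f.charpoly := e.symm.charpoly_conj f
  set fT : T →ₗ[K] T := (LinearMap.snd K S T).comp (g.comp (LinearMap.inr K S T)) with hfT
  have hfTt : ∀ t : T, fT t = (e.symm (f (t : V))).2 := by
    intro t
    have h0 : e ((0 : S), t) = (t : V) := by
      rw [Submodule.coe_prodEquivOfIsCompl']
      simp
    simp [hfT, hgx, h0]
  let b₁ := Module.Free.chooseBasis K S
  let b₂ := Module.Free.chooseBasis K T
  have key : LinearMap.toMatrix (b₁.prod b₂) (b₁.prod b₂) g =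
      Matrix.fromBlocks (LinearMap.toMatrix b₁ b₁ (f.restrict h))
        (Matrix.of fun i k => b₁.repr (g (b₁.prod b₂ (Sum.inr k))).1 i) 0
        (LinearMap.toMatrix b₂ b₂ fT) := by
    ext i j
    rcases j with j | j
    · have hbj : (b₁.prod b₂) (Sum.inl j) = ((b₁ j : S), (0 : T)) :=
        Prod.ext (b₁.prod_apply_inl_fst b₂ j) (b₁.prod_apply_inl_snd b₂ j)
      have hgb : g ((b₁ j : S), (0 : T)) = ((f.restrict h) (b₁ j), 0) := by
        rw [hgx]
        apply e.symm_apply_eq.2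
        rw [Submodule.coe_prodEquivOfIsCompl', Submodule.coe_prodEquivOfIsCompl']
        simp [LinearMap.restrict_apply]
      rcases i with i | i
      · rw [LinearMap.toMatrix_apply, hbj, hgb, Basis.prod_repr_inl]
        simp [Matrix.fromBlocks, LinearMap.toMatrix_apply]
      · rw [LinearMap.toMatrix_apply, hbj, hgb, Basis.prod_repr_inr]
        simp [Matrix.fromBlocks]
    · rcases i with i | i
      · rw [LinearMap.toMatrix_apply, Basis.prod_repr_inl]
        simp [Matrix.fromBlocks]
      · have hbj : (b₁.prod b₂) (Sum.inr j) = ((0 : S), (b₂ j : T)) :=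
          Prod.ext (b₁.prod_apply_inr_fst b₂ j) (b₁.prod_apply_inr_snd b₂ j)
        have h2 : (g ((b₁.prod b₂) (Sum.inr j))).2 = fT (b₂ j) := by
          rw [hbj, hfT]
          simp
        rw [LinearMap.toMatrix_apply, Basis.prod_repr_inr, h2]
        simp [Matrix.fromBlocks, LinearMap.toMatrix_apply]
  have h1 : g.charpoly = (f.restrict h).charpoly * fT.charpoly := by
    rw [← LinearMap.charpoly_toMatrix g (b₁.prod b₂), key, Matrix.charpoly_fromBlocks_zero₂₁,
      LinearMap.charpoly_toMatrix, LinearMap.charpoly_toMatrix]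
  have h2 : fT.charpoly = (S.mapQ S f h).charpoly := by
    set eq := S.quotientEquivOfIsCompl T hcompl with heq
    have hconj : fT = eq.conj (S.mapQ S f h) := by
      ext t
      have hc : (eq.conj (S.mapQ S f h)) t = eq ((S.mapQ S f h) (eq.symm t)) := by
        simp [LinearEquiv.conj_apply]
      have h1' : eq.symm t = Submodule.Quotient.mk (t : V) := rfl
      rw [hc, h1', Submodule.mapQ_apply, hfTt]
      have hmk : Submodule.Quotient.mk (f (t : V)) =
          (Submodule.Quotient.mk (((e.symm (f (t : V))).2 : T) : V) : V ⧸ S) := by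
        rw [Submodule.Quotient.eq]
        have hd : ((e.symm (f (t : V))).1 : V) + ((e.symm (f (t : V))).2 : V) = f (t : V) := by
          rw [← Submodule.coe_prodEquivOfIsCompl']
          exact e.apply_symm_apply _
        have h3 : f (t : V) - ((e.symm (f (t : V))).2 : V) = ((e.symm (f (t : V))).1 : V) :=
          sub_eq_of_eq_add hd.symm
        rw [h3]
        exact (e.symm (f (t : V))).1.2
      rw [hmk, heq]
      exact congrArg Subtype.val (S.quotientEquivOfIsCompl_apply_mk_coe hcompl _).symm
    rw [hconj, LinearEquiv.charpoly_conj]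
  rw [← hgf, h1, h2]


variable {V₂ : Type*} [AddCommGroup V₂] [Module ℝ V₂] [FiniteDimensional ℝ V₂]

/-- A nonconstant divisor of the characteristic polynomial has nontrivial kernel after `aeval`. -/
theorem exists_ne_zero_aeval_eq_zero (f : V₂ →ₗ[ℝ] V₂) (p : ℝ[X]) (hp : 0 < p.natDegree)
    (hdvd : p ∣ f.charpoly) : ∃ v : V₂, v ≠ 0 ∧ (Polynomial.aeval f p) v = 0 := by
  classical
  let b := Module.Free.chooseBasis ℝ V₂
  set M : Matrix _ _ ℝ := LinearMap.toMatrix b b f with hMdef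
  have hcp : M.charpoly = f.charpoly := f.charpoly_toMatrix b
  set ψ : ℝ →+* ℂ := algebraMap ℝ ℂ with hψ
  set Mc : Matrix _ _ ℂ := M.map ψ with hMc
  have hpm : 0 < (p.map ψ).natDegree := by rwa [Polynomial.natDegree_map]
  obtain ⟨μ, hμ⟩ := Complex.exists_root (Polynomial.natDegree_pos_iff_degree_pos.1 hpm)
  obtain ⟨q, hq⟩ := (Polynomial.dvd_iff_isRoot).2 hμ
  have hroot : (Mc.charpoly).eval μ = 0 := by
    obtain ⟨c, hc⟩ := hdvd
    have h1 : Mc.charpoly = (p.map ψ) * (c.map ψ) := by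
      rw [hMc, Matrix.charpoly_map, hcp, hc, Polynomial.map_mul]
    rw [h1, Polynomial.eval_mul, show (p.map ψ).eval μ = 0 from hμ, zero_mul]
  have hdet0 : (μ • (1 : Matrix _ _ ℂ) - Mc).det = 0 := by
    have hevalchar : (Mc.charpoly).eval μ = (μ • (1 : Matrix _ _ ℂ) - Mc).det := by
      rw [Matrix.charpoly, ← Polynomial.coe_evalRingHom, RingHom.map_det]
      congr 1
      ext i j
      by_cases hij : i = j <;>
        simp [Matrix.charmatrix_apply, Matrix.map_apply, Matrix.sub_apply, Matrix.smul_apply,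
          Matrix.one_apply, hij]
    rw [← hevalchar, hroot]
  have hdetmc : (Polynomial.aeval Mc (p.map ψ)).det = 0 := by
    rw [hq, map_mul, Matrix.det_mul]
    have h1 : (Polynomial.aeval Mc (Polynomial.X - Polynomial.C μ)) = Mc - μ • 1 := by
      rw [map_sub, Polynomial.aeval_X, Polynomial.aeval_C, Algebra.algebraMap_eq_smul_one]
    have h2 : (Mc - μ • 1).det = 0 := by
      rw [show Mc - μ • 1 = -(μ • (1 : Matrix _ _ ℂ) - Mc) from (neg_sub _ _).symm,
        Matrix.det_neg, hdet0, mul_zero]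
    rw [h1, h2, zero_mul]
  have hdetM0 : (Polynomial.aeval M p).det = 0 := by
    have hmap : (Polynomial.aeval M p).map ψ = Polynomial.aeval Mc (p.map ψ) := by
      let Φ : Matrix (Module.Free.ChooseBasisIndex ℝ V₂) (Module.Free.ChooseBasisIndex ℝ V₂) ℝ
          →ₐ[ℝ] Matrix (Module.Free.ChooseBasisIndex ℝ V₂) (Module.Free.ChooseBasisIndex ℝ V₂) ℂ :=
        (Algebra.ofId ℝ ℂ).mapMatrix
      have hΦ : ∀ N : Matrix (Module.Free.ChooseBasisIndex ℝ V₂) (Module.Free.ChooseBasisIndex ℝ V₂) ℝ, Φ N = N.map ψ := by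
        intro N
        rw [AlgHom.mapMatrix_apply]
        rfl
      have h3 := Polynomial.aeval_algHom_apply Φ M p
      rw [hΦ, hΦ, ← hMc] at h3
      rw [← h3, Polynomial.aeval_map_algebraMap]
    have h5 := RingHom.map_det ψ (Polynomial.aeval M p)
    rw [RingHom.mapMatrix_apply, hmap, hdetmc] at h5
    exact ψ.injective (by simpa using h5)
  have hdetf : LinearMap.det (Polynomial.aeval f p) = 0 := by
    have heq : LinearMap.toMatrix b b (Polynomial.aeval f p) = Polynomial.aeval M p := by
      have h4 := Polynomial.aeval_algHom_apply (LinearMap.toMatrixAlgEquiv b).toAlgHom f p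
      exact h4.symm
    rw [← LinearMap.det_toMatrix b, heq, hdetM0]
  obtain ⟨v, hv, hv0⟩ := SetLike.exists_of_lt (LinearMap.bot_lt_ker_of_det_eq_zero hdetf)
  exact ⟨v, by simpa using hv0, hv⟩

/-- An irreducible annihilating polynomial of a nonzero vector generates an invariant subspace
on which the charpoly is that polynomial. -/
theorem exists_cyclic_subspace (f : V₂ →ₗ[ℝ] V₂) (p : ℝ[X]) (hp : p.Monic)
    (hirr : Irreducible p) (v : V₂) (hv : v ≠ 0) (hpv : Polynomial.aeval f p v = 0) :
    ∃ (L : Submodule ℝ V₂) (hL : ∀ x ∈ L, f x ∈ L), (f.restrict hL).charpoly = p := by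
  classical
  set φ : ℝ[X] →ₗ[ℝ] V₂ :=
    { toFun := fun q => Polynomial.aeval f q v
      map_add' := by intro a b; simp
      map_smul' := by intro a b; simp } with hφ
  set L : Submodule ℝ V₂ := LinearMap.range φ with hLdef
  have hvL : v ∈ L := ⟨1, by simp [hφ]⟩
  have hL : ∀ x ∈ L, f x ∈ L := by
    rintro x ⟨q, rfl⟩
    refine ⟨Polynomial.X * q, ?_⟩
    simp only [hφ, LinearMap.coe_mk, AddHom.coe_mk, map_mul, Polynomial.aeval_X]
    rw [Module.End.mul_apply]
  have hkill : ∀ x ∈ L, Polynomial.aeval f p x = 0 := by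
    rintro x ⟨q, rfl⟩
    simp only [hφ, LinearMap.coe_mk, AddHom.coe_mk]
    rw [← Module.End.mul_apply, ← map_mul, mul_comm, map_mul, Module.End.mul_apply, hpv, map_zero]
  refine ⟨L, hL, ?_⟩
  have hpow : ∀ (n : ℕ) (x : L), ((((f.restrict hL) ^ n) x : L) : V₂) = (f ^ n) (x : V₂) := by
    intro n
    induction n with
    | zero => intro x; simp
    | succ n ih =>
      intro x
      rw [pow_succ, pow_succ, Module.End.mul_apply, Module.End.mul_apply, ih,
        LinearMap.restrict_coe_apply]
  have haeval : ∀ (q : ℝ[X]) (x : L),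
      (((Polynomial.aeval (f.restrict hL) q) x : L) : V₂) = (Polynomial.aeval f q) (x : V₂) := by
    intro q x
    induction q using Polynomial.induction_on' with
    | add a b ha hb => simp [ha, hb]
    | monomial n a =>
      simp [Polynomial.aeval_monomial, Module.End.mul_apply, Module.algebraMap_end_apply, hpow]
  have hann : Polynomial.aeval (f.restrict hL) p = 0 := by
    apply LinearMap.ext
    intro x
    apply Subtype.ext
    rw [haeval]
    simpa using hkill (x : V₂) x.2
  haveI : Nontrivial L := ⟨⟨⟨v, hvL⟩, 0, by simp [Subtype.ext_iff, hv]⟩⟩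
  have hmp : minpoly ℝ (f.restrict hL) = p := by
    have hdvd : minpoly ℝ (f.restrict hL) ∣ p := minpoly.dvd ℝ _ hann
    obtain ⟨c, hc⟩ := hdvd
    rcases hirr.isUnit_or_isUnit hc with hm | hcu
    · exfalso
      have h1 : minpoly ℝ (f.restrict hL) = 1 :=
        ((minpoly.monic (f.restrict hL).isIntegral).eq_one_of_isUnit hm)
      have h2 := minpoly.aeval ℝ (f.restrict hL)
      rw [h1, map_one] at h2
      have h3 : ((1 : Module.End ℝ L)) ⟨v, hvL⟩ = (0 : Module.End ℝ L) ⟨v, hvL⟩ := by rw [h2]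
      simp only [Module.End.one_apply, LinearMap.zero_apply] at h3
      exact hv (by simpa [Subtype.ext_iff] using h3)
    · have hassoc : Associated (minpoly ℝ (f.restrict hL)) p :=
        ⟨hcu.unit, by rw [IsUnit.unit_spec]; exact hc.symm⟩
      exact Polynomial.eq_of_monic_of_associated (minpoly.monic (f.restrict hL).isIntegral)
        hp hassoc
  have hd : 0 < p.natDegree := hirr.natDegree_pos
  have hrank : Module.finrank ℝ L ≤ p.natDegree := by
    have hspan : L ≤ Submodule.span ℝ
        (Set.range fun i : Fin p.natDegree => (f ^ (i : ℕ)) v) := by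
      rintro x ⟨q, rfl⟩
      have hmod : Polynomial.aeval f q v = Polynomial.aeval f (q %ₘ p) v := by
        conv_lhs => rw [← Polynomial.modByMonic_add_div q p]
        rw [map_add, LinearMap.add_apply, mul_comm, map_mul, Module.End.mul_apply, hpv,
          map_zero, add_zero]
      have hxeq : φ q = Polynomial.aeval f (q %ₘ p) v := hmod
      rw [hxeq]
      by_cases hq0 : q %ₘ p = 0
      · simp [hq0]
      · have hlt : (q %ₘ p).natDegree < p.natDegree :=
          Polynomial.natDegree_lt_natDegree hq0 (Polynomial.degree_modByMonic_lt q hp)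
        rw [Polynomial.aeval_eq_sum_range' hlt, LinearMap.sum_apply]
        refine Submodule.sum_mem _ ?_
        intro i hi
        rw [LinearMap.smul_apply]
        exact Submodule.smul_mem _ _
          (Submodule.subset_span ⟨⟨i, Finset.mem_range.1 hi⟩, rfl⟩)
    calc Module.finrank ℝ L ≤ Module.finrank ℝ (Submodule.span ℝ
        (Set.range fun i : Fin p.natDegree => (f ^ (i : ℕ)) v)) := Submodule.finrank_mono hspan
      _ ≤ p.natDegree := by
        refine le_trans (finrank_span_le_card _) ?_
        rw [Set.toFinset_range]
        exact le_trans (Finset.card_image_le) (by simp)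
  have hdvdc : p ∣ (f.restrict hL).charpoly := hmp ▸ (f.restrict hL).minpoly_dvd_charpoly
  obtain ⟨c, hc⟩ := hdvdc
  have hmonc : (f.restrict hL).charpoly.Monic := LinearMap.charpoly_monic _
  have hne : c ≠ 0 := by
    intro h0
    rw [h0, mul_zero] at hc
    exact hmonc.ne_zero hc
  have hdeg : (f.restrict hL).charpoly.natDegree ≤ p.natDegree := by
    rw [(f.restrict hL).charpoly_natDegree]
    exact hrank
  have hcdeg : c.natDegree = 0 := by
    have := Polynomial.natDegree_mul (hp.ne_zero) hne
    rw [← hc] at this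
    omega
  have hcmon : c.Monic := by
    have hlc := congrArg Polynomial.leadingCoeff hc
    rw [Polynomial.leadingCoeff_mul, hmonc.leadingCoeff, hp.leadingCoeff, one_mul] at hlc
    exact hlc.symm
  have : c = 1 := hcmon.natDegree_eq_zero.1 hcdeg
  rw [hc, this, mul_one]

/-- Every monic divisor of the characteristic polynomial is realized as the characteristic
polynomial of the restriction to an invariant subspace. -/
theorem exists_invariant_charpoly_eq (N : ℕ) :
    ∀ (V : Type) [AddCommGroup V] [Module ℝ V] [FiniteDimensional ℝ V]
      (f : V →ₗ[ℝ] V) (g : ℝ[X]), g.Monic → g ∣ f.charpoly → g.natDegree ≤ N →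
      ∃ (W : Submodule ℝ V) (hW : ∀ x ∈ W, f x ∈ W), (f.restrict hW).charpoly = g := by
  have base : ∀ (V : Type) [AddCommGroup V] [Module ℝ V] [FiniteDimensional ℝ V]
      (f : V →ₗ[ℝ] V) (g : ℝ[X]), g.Monic → g.natDegree = 0 →
      ∃ (W : Submodule ℝ V) (hW : ∀ x ∈ W, f x ∈ W), (f.restrict hW).charpoly = g := by
    intro V _ _ _ f g hmon hdeg
    have hg1 : g = 1 := hmon.natDegree_eq_zero.1 hdeg
    refine ⟨⊥, by simp, ?_⟩
    rw [hg1]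
    refine (LinearMap.charpoly_monic _).natDegree_eq_zero.1 ?_
    rw [LinearMap.charpoly_natDegree]
    simp
  induction N with
  | zero =>
    intro V _ _ _ f g hmon hdvd hdeg
    exact base V f g hmon (Nat.le_zero.1 hdeg)
  | succ N ih =>
    intro V _ _ _ f g hmon hdvd hdeg
    by_cases h0 : g.natDegree = 0
    · exact base V f g hmon h0
    · obtain ⟨p₀, hp₀irr, hp₀dvd⟩ :=
        Polynomial.exists_irreducible_of_natDegree_pos (Nat.pos_of_ne_zero h0)
      have hp₀ne : p₀ ≠ 0 := hp₀irr.ne_zero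
      set p : ℝ[X] := p₀ * Polynomial.C (p₀.leadingCoeff)⁻¹ with hpdef
      have hpmon : p.Monic := Polynomial.monic_mul_leadingCoeff_inv hp₀ne
      have hassoc : Associated p₀ p := by
        refine ⟨(Polynomial.isUnit_C.2 (isUnit_iff_ne_zero.2 (inv_ne_zero
          (Polynomial.leadingCoeff_ne_zero.2 hp₀ne)))).unit, ?_⟩
        rw [IsUnit.unit_spec]
      have hpirr : Irreducible p := hassoc.irreducible hp₀irr
      have hpdvdg : p ∣ g := hassoc.symm.dvd.trans hp₀dvd
      have hpdvdχ : p ∣ f.charpoly := hpdvdg.trans hdvd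
      obtain ⟨v, hv, hpv⟩ :=
        exists_ne_zero_aeval_eq_zero f p hpirr.natDegree_pos hpdvdχ
      obtain ⟨L, hL, hcpL⟩ := exists_cyclic_subspace f p hpmon hpirr v hv hpv
      set fbar := L.mapQ L f hL with hfbar
      have hmul : f.charpoly = p * fbar.charpoly := by
        rw [charpoly_restrict_mul_mapQ f L hL, hcpL]
      obtain ⟨g', hg'⟩ := hpdvdg
      have hg'ne : g' ≠ 0 := by
        intro h; rw [h, mul_zero] at hg'; exact hmon.ne_zero hg'
      have hg'mon : g'.Monic := by
        have := congrArg Polynomial.leadingCoeff hg'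
        rw [Polynomial.leadingCoeff_mul, hmon.leadingCoeff, hpmon.leadingCoeff, one_mul] at this
        exact this.symm
      have hg'dvd : g' ∣ fbar.charpoly := by
        have h1 : p * g' ∣ p * fbar.charpoly := by rw [← hg', ← hmul]; exact hdvd
        exact (mul_dvd_mul_iff_left hpmon.ne_zero).1 h1
      have hg'deg : g'.natDegree ≤ N := by
        have h2 := congrArg Polynomial.natDegree hg'
        rw [Polynomial.natDegree_mul hpmon.ne_zero hg'ne] at h2
        have := hpirr.natDegree_pos
        omega
      obtain ⟨Wbar, hWbar, hcpW⟩ := ih (V ⧸ L) fbar g' hg'mon hg'dvd hg'deg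
      set W : Submodule ℝ V := Wbar.comap L.mkQ with hWdef
      have hW : ∀ x ∈ W, f x ∈ W := by
        intro x hx
        have h6 : L.mkQ (f x) = fbar (L.mkQ x) := rfl
        rw [hWdef, Submodule.mem_comap] at hx ⊢
        rw [h6]
        exact hWbar _ hx
      have hLW : L ≤ W := by
        intro x hx
        simp only [hWdef, Submodule.mem_comap, Submodule.mkQ_apply,
          (Submodule.Quotient.mk_eq_zero L).2 hx]
        exact Wbar.zero_mem
      refine ⟨W, hW, ?_⟩
      set L' : Submodule ℝ W := L.comap W.subtype with hL'def
      have hL' : ∀ x ∈ L', (f.restrict hW) x ∈ L' := by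
        intro x hx
        simp only [hL'def, Submodule.mem_comap, Submodule.coe_subtype] at hx ⊢
        rw [LinearMap.restrict_coe_apply]
        exact hL _ hx
      have hsplit := charpoly_restrict_mul_mapQ (f.restrict hW) L' hL'
      -- first factor
      have hfac1 : ((f.restrict hW).restrict hL').charpoly = p := by
        set e₁ := Submodule.comapSubtypeEquivOfLe hLW with he₁
        have hcoe : ∀ z : L.comap W.subtype, ((e₁ z : L) : V) = ((z : W) : V) := by
          intro z
          rw [he₁]
          exact Submodule.comapSubtypeEquivOfLe_apply_coe hLW z
        have h7 : ∀ y : L, (((e₁.symm y : L.comap W.subtype) : W) : V) = (y : V) := by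
          intro y
          rw [← hcoe (e₁.symm y), e₁.apply_symm_apply]
        have hconj : (f.restrict hW).restrict hL' = e₁.symm.conj (f.restrict hL) := by
          apply LinearMap.ext
          intro x
          apply Subtype.ext
          apply Subtype.ext
          rw [LinearEquiv.conj_apply]
          simp only [LinearMap.comp_apply, LinearEquiv.coe_coe]
          simp only [LinearMap.restrict_coe_apply]
          rw [h7]
          simp only [LinearMap.restrict_coe_apply]
          rw [LinearEquiv.symm_symm, hcoe]
        rw [hconj, LinearEquiv.charpoly_conj, hcpL]
      -- second factor
      have hfac2 : (L'.mapQ L' (f.restrict hW) hL').charpoly = g' := by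
        set ψ : W →ₗ[ℝ] Wbar :=
          (L.mkQ.comp W.subtype).codRestrict Wbar (fun w => w.2) with hψdef
        have hψapp : ∀ w : W, (ψ w : V ⧸ L) = L.mkQ (w : V) := fun w => rfl
        have hkerψ : L' ≤ LinearMap.ker ψ := by
          intro x hx
          rw [LinearMap.mem_ker]
          apply Subtype.ext
          rw [hψapp]
          simpa [hL'def, Submodule.mkQ_apply, Submodule.Quotient.mk_eq_zero] using hx
        set ψ' := L'.liftQ ψ hkerψ with hψ'def
        have hinj : Function.Injective ψ' := by
          rw [← LinearMap.ker_eq_bot]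
          apply Submodule.ker_liftQ_eq_bot
          intro x hx
          rw [LinearMap.mem_ker] at hx
          have : L.mkQ (x : V) = 0 := by rw [← hψapp, hx]; rfl
          simpa [hL'def, Submodule.mem_comap, Submodule.mkQ_apply,
            Submodule.Quotient.mk_eq_zero] using this
        have hsurj : Function.Surjective ψ' := by
          intro z
          obtain ⟨x, hx⟩ := L.mkQ_surjective (z : V ⧸ L)
          have hxW : x ∈ W := by
            simp only [hWdef, Submodule.mem_comap, hx]
            exact z.2
          refine ⟨Submodule.Quotient.mk ⟨x, hxW⟩, ?_⟩
          rw [hψ'def, Submodule.liftQ_apply]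
          exact Subtype.ext (by rw [hψapp]; exact hx)
        set e₂ := LinearEquiv.ofBijective ψ' ⟨hinj, hsurj⟩ with he₂
        have h5 : ∀ w' : W, e₂ (Submodule.Quotient.mk w') = ψ w' := fun w' => by
          rw [he₂]; rfl
        have hcomm : ∀ u : W ⧸ L',
            e₂ ((L'.mapQ L' (f.restrict hW) hL') u) = (fbar.restrict hWbar) (e₂ u) := by
          intro u
          obtain ⟨w, rfl⟩ := Submodule.Quotient.mk_surjective L' u
          rw [show (L'.mapQ L' (f.restrict hW) hL') (Submodule.Quotient.mk w)
            = Submodule.Quotient.mk ((f.restrict hW) w) from rfl, h5, h5]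
          apply Subtype.ext
          rw [hψapp, LinearMap.restrict_coe_apply, LinearMap.restrict_coe_apply, hψapp]
          rfl
        have hconj2 : fbar.restrict hWbar = e₂.conj (L'.mapQ L' (f.restrict hW) hL') := by
          apply LinearMap.ext
          intro z
          rw [LinearEquiv.conj_apply]
          simp only [LinearMap.comp_apply, LinearEquiv.coe_coe]
          rw [hcomm, e₂.apply_symm_apply]
        rw [← hcpW, hconj2, LinearEquiv.charpoly_conj]
      rw [hsplit, hfac1, hfac2, hg']

/-- If `A` is an `n×n` integer matrix and `S` a nonzero proper `A`-invariant subspace of `ℝⁿ`,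
then there is an `A`-invariant subspace `W` with `det A = det(A|S) · det(A|W)`. -/
theorem exists_complement_det_mul
    (n : ℕ) (A : Matrix (Fin n) (Fin n) ℤ)
    (S : Submodule ℝ (Fin n → ℝ)) (hS0 : S ≠ ⊥) (hStop : S ≠ ⊤)
    (hinv : ∀ v ∈ S, Matrix.toLin' (A.map (Int.cast : ℤ → ℝ)) v ∈ S) :
    ∃ (W : Submodule ℝ (Fin n → ℝ))
      (hW : ∀ v ∈ W, Matrix.toLin' (A.map (Int.cast : ℤ → ℝ)) v ∈ W),
      (A.map (Int.cast : ℤ → ℝ)).det =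
        LinearMap.det ((Matrix.toLin' (A.map (Int.cast : ℤ → ℝ))).restrict hinv) *
        LinearMap.det ((Matrix.toLin' (A.map (Int.cast : ℤ → ℝ))).restrict hW) := by
  classical
  set f := Matrix.toLin' (A.map (Int.cast : ℤ → ℝ)) with hf
  have hsplit := charpoly_restrict_mul_mapQ f S hinv
  set pS := (f.restrict hinv).charpoly with hpS
  set q := (S.mapQ S f hinv).charpoly with hq
  have hqmon : q.Monic := LinearMap.charpoly_monic _
  have hqdvd : q ∣ f.charpoly := ⟨pS, by rw [hsplit, mul_comm]⟩
  obtain ⟨W, hW, hcpW⟩ :=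
    exists_invariant_charpoly_eq q.natDegree (Fin n → ℝ) f q hqmon hqdvd le_rfl
  refine ⟨W, hW, ?_⟩
  have hdetf : (A.map (Int.cast : ℤ → ℝ)).det = LinearMap.det f := (LinearMap.det_toLin' _).symm
  rw [hdetf, LinearMap.det_eq_sign_charpoly_coeff f,
    LinearMap.det_eq_sign_charpoly_coeff (f.restrict hinv),
    LinearMap.det_eq_sign_charpoly_coeff (f.restrict hW), hcpW, ← hpS]
  have h1 : (f.charpoly).coeff 0 = pS.coeff 0 * q.coeff 0 := by
    rw [hsplit, Polynomial.mul_coeff_zero]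
  have hWdeg : Module.finrank ℝ W = q.natDegree := by
    rw [← hcpW, LinearMap.charpoly_natDegree]
  have hSdeg : Module.finrank ℝ S = pS.natDegree := by
    rw [hpS, LinearMap.charpoly_natDegree]
  have hVdeg : Module.finrank ℝ (Fin n → ℝ) = (f.charpoly).natDegree :=
    (LinearMap.charpoly_natDegree f).symm
  have hfr : Module.finrank ℝ (Fin n → ℝ) = Module.finrank ℝ S + Module.finrank ℝ W := by
    have h2 := congrArg Polynomial.natDegree hsplit
    rw [Polynomial.natDegree_mul (LinearMap.charpoly_monic _).ne_zero hqmon.ne_zero] at h2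
    rw [hVdeg, hSdeg, hWdeg, ← hpS] at *
    omega
  rw [h1, hfr, pow_add]
  ring
end

section
/- Let A be an n×n integer matrix and S a nonzero proper A-invariant subspace of ℝ^n. If det(A|_S) is a nonzero integer, then det(A|_S) divides det(A); in particular |det(A|_S)| ≤ |det(A)| when det(A) ≠ 0. -/
open Polynomial in
/-- If `A` is an `n×n` integer matrix, `S` a nonzero proper `A`-invariant subspace of `ℝⁿ`,
and `det(A|S)` is a nonzero integer `m`, then `m` divides `det A`; in particular
`|det(A|S)| ≤ |det A|` when `det A ≠ 0`. -/
theorem det_restrict_dvd_det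
    (n : ℕ) (A : Matrix (Fin n) (Fin n) ℤ)
    (S : Submodule ℝ (Fin n → ℝ)) (hS0 : S ≠ ⊥) (hStop : S ≠ ⊤)
    (hinv : ∀ v ∈ S, Matrix.toLin' (A.map (Int.cast : ℤ → ℝ)) v ∈ S)
    (m : ℤ) (hm0 : m ≠ 0)
    (hm : LinearMap.det ((Matrix.toLin' (A.map (Int.cast : ℤ → ℝ))).restrict hinv) = (m : ℝ)) :
    m ∣ A.det ∧ (A.det ≠ 0 → |m| ≤ |A.det|) := by
  classical
  set A' : Matrix (Fin n) (Fin n) ℝ := A.map (Int.cast : ℤ → ℝ) with hA'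
  set f : (Fin n → ℝ) →ₗ[ℝ] (Fin n → ℝ) := Matrix.toLin' A' with hf
  obtain ⟨T, hT⟩ := Submodule.exists_isCompl S
  let bS := Module.Free.chooseBasis ℝ S
  let bT := Module.Free.chooseBasis ℝ T
  let e := Submodule.prodEquivOfIsCompl S T hT
  let b := (bS.prod bT).map e
  -- repr of elements of S in b
  have hrepr_inr : ∀ (x : (Fin n → ℝ)) (hx : x ∈ S) j, b.repr x (Sum.inr j) = 0 := by
    intro x hx j
    have h' : e.symm x = (⟨x, hx⟩, 0) := Submodule.prodEquivOfIsCompl_symm_apply_left (p := S) (q := T) hT ⟨x, hx⟩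
    simp [b, Module.Basis.map_repr, h', Module.Basis.prod_repr_inr]
  have hrepr_inl : ∀ (x : (Fin n → ℝ)) (hx : x ∈ S) i,
      b.repr x (Sum.inl i) = bS.repr (⟨x, hx⟩ : S) i := by
    intro x hx i
    have h' : e.symm x = (⟨x, hx⟩, 0) := Submodule.prodEquivOfIsCompl_symm_apply_left (p := S) (q := T) hT ⟨x, hx⟩
    simp [b, Module.Basis.map_repr, h', Module.Basis.prod_repr_inl]
  have hb_inl : ∀ i, b (Sum.inl i) = (bS i : Fin n → ℝ) := by
    intro i
    simp [b, Module.Basis.map_apply, Module.Basis.prod_apply, e, Submodule.coe_prodEquivOfIsCompl']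
  set M := LinearMap.toMatrix b b f with hM
  set B := LinearMap.toMatrix bS bS (f.restrict hinv) with hB
  have hblocks : M = Matrix.fromBlocks B (fun i j => M (Sum.inl i) (Sum.inr j)) 0
      (fun i j => M (Sum.inr i) (Sum.inr j)) := by
    ext i j
    cases i with
    | inl i =>
      cases j with
      | inl j =>
        have hmem : f (bS j : Fin n → ℝ) ∈ S := hinv _ (bS j).2
        have : M (Sum.inl i) (Sum.inl j) = b.repr (f (b (Sum.inl j))) (Sum.inl i) :=
          LinearMap.toMatrix_apply b b f (Sum.inl i) (Sum.inl j)
        rw [this, hb_inl, hrepr_inl _ hmem]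
        simp only [Matrix.fromBlocks, Matrix.of_apply, Sum.elim_inl, B,
          LinearMap.toMatrix_apply, LinearMap.restrict_apply]
      | inr j => simp [Matrix.fromBlocks]
    | inr i =>
      cases j with
      | inl j =>
        have hmem : f (bS j : Fin n → ℝ) ∈ S := hinv _ (bS j).2
        have : M (Sum.inr i) (Sum.inl j) = b.repr (f (b (Sum.inl j))) (Sum.inr i) :=
          LinearMap.toMatrix_apply b b f (Sum.inr i) (Sum.inl j)
        rw [this, hb_inl, hrepr_inr _ hmem]
        simp [Matrix.fromBlocks]
      | inr j => simp [Matrix.fromBlocks]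
  -- charpoly factorization
  set p := (f.restrict hinv).charpoly with hp
  set q := (Matrix.of fun i j => M (Sum.inr i) (Sum.inr j)).charpoly with hq
  have hq_monic : q.Monic := Matrix.charpoly_monic _
  have hfact : (Matrix.charpoly A).map (Int.castRingHom ℝ) = p * q := by
    have h1 : (Matrix.charpoly A).map (Int.castRingHom ℝ) = A'.charpoly :=
      (Matrix.charpoly_map A (Int.castRingHom ℝ)).symm
    have h2 : A'.charpoly = f.charpoly := by
      rw [← LinearMap.charpoly_toMatrix f (Pi.basisFun ℝ (Fin n)),
        LinearMap.toMatrix_eq_toMatrix', hf, LinearMap.toMatrix'_toLin']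
    have h3 : f.charpoly = M.charpoly := (LinearMap.charpoly_toMatrix f b).symm
    have h4 : M.charpoly = B.charpoly * q := by
      rw [hblocks]
      exact Matrix.charpoly_fromBlocks_zero₂₁ _ _ _
    have h5 : B.charpoly = p := LinearMap.charpoly_toMatrix (f.restrict hinv) bS
    rw [h1, h2, h3, h4, h5]
  -- constant coefficients
  set d := Module.finrank ℝ S with hd
  have hp0 : p.coeff 0 = (-1 : ℝ) ^ d * m := by
    have := LinearMap.det_eq_sign_charpoly_coeff (f.restrict hinv)
    rw [hm] at this
    have h2 : ((-1 : ℝ) ^ d) * ((-1 : ℝ) ^ d * p.coeff 0) = (-1 : ℝ) ^ d * m := by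
      rw [← this]
    rwa [← mul_assoc, ← pow_add, ← two_mul, pow_mul, neg_one_sq, one_pow, one_mul] at h2
  set a0 := (Matrix.charpoly A).coeff 0 with ha0
  have hdetA : A.det = (-1 : ℤ) ^ n * a0 := by
    simpa using Matrix.det_eq_sign_charpoly_coeff A
  have hcoeff : (a0 : ℝ) = p.coeff 0 * q.coeff 0 := by
    have := congrArg (fun P => Polynomial.coeff P 0) hfact
    simpa [Polynomial.coeff_map, Polynomial.mul_coeff_zero] using this
  -- q.coeff 0 is integral over ℤ
  have hq_dvd : q ∣ (Matrix.charpoly A).map (Int.castRingHom ℝ) := ⟨p, by rw [hfact, mul_comm]⟩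
  have hq_lifts := integralClosure.mem_lifts_of_monic_of_dvd_map (R := ℤ) ℝ
    (Matrix.charpoly_monic A) hq_monic (by simpa using hq_dvd)
  have hc_int : IsIntegral ℤ (q.coeff 0) := by
    rw [Polynomial.lifts_iff_coeff_lifts] at hq_lifts
    obtain ⟨⟨x, hx⟩, hxe⟩ := hq_lifts 0
    exact hxe ▸ hx
  -- identify q.coeff 0 with a rational number
  set r : ℚ := ((-1 : ℚ) ^ d * (a0 : ℚ)) / (m : ℚ) with hr
  have hrc : (r : ℝ) = q.coeff 0 := by
    have hmR : (m : ℝ) ≠ 0 := Int.cast_ne_zero.mpr hm0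
    have : (a0 : ℝ) = ((-1 : ℝ) ^ d * m) * q.coeff 0 := by rw [hcoeff, hp0]
    have h' : (a0 : ℝ) = ((-1 : ℝ) ^ d * m) * q.coeff 0 := by rw [hcoeff, hp0]
    rw [hr]
    push_cast
    rw [div_eq_iff hmR, h', ← mul_assoc, ← mul_assoc, ← pow_add, ← two_mul, pow_mul,
      neg_one_sq, one_pow, one_mul]
    ring
  have hr_int : IsIntegral ℤ r := by
    have : IsIntegral ℤ ((algebraMap ℚ ℝ) r) := by
      rw [show (algebraMap ℚ ℝ) r = (r : ℝ) from rfl, hrc]; exact hc_int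
    exact IsIntegral.tower_bot_of_field this
  obtain ⟨y, hy⟩ := IsIntegrallyClosed.isIntegral_iff.mp hr_int
  -- conclude divisibility
  have hmy : m * y = (-1 : ℤ) ^ d * a0 := by
    have : ((m * y : ℤ) : ℚ) = (((-1 : ℤ) ^ d * a0 : ℤ) : ℚ) := by
      push_cast
      rw [show ((y : ℚ)) = r from hy, hr]
      field_simp
    exact_mod_cast this
  have hdvd0 : m ∣ (-1 : ℤ) ^ d * a0 := ⟨y, hmy.symm⟩
  have hdvda0 : m ∣ a0 := by
    have h2 := hdvd0.mul_left ((-1 : ℤ) ^ d)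
    rwa [← mul_assoc, ← pow_add, ← two_mul, pow_mul, neg_one_sq, one_pow, one_mul] at h2
  have hdvd : m ∣ A.det := by
    rw [hdetA]; exact hdvda0.mul_left _
  exact ⟨hdvd, fun h => Int.le_of_dvd (abs_pos.mpr h) ((abs_dvd _ _).mpr ((dvd_abs _ _).mpr hdvd))⟩
end

section
/- Let H, G, K be groups with group morphisms α: H → G, β: G → K, φ: H → H, ψ: G → G, ν: K → K such that φ is an isomorphism, the sequence H → G → K → 0 is exact (β surjective and Im(α) = Ker(β)), and the diagram commutes (ψ∘α = α∘φ and ν∘β = β∘ψ). Then the index [G : ψ(G)] equals the index [K : ν(K)]. -/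
/-- Algebraic degree lemma: given a commutative diagram over the exact sequence
`H → G → K → 0` with `φ : H → H` an isomorphism, the index of `ψ(G)` in `G`
equals the index of `ν(K)` in `K` (as cardinals of coset spaces). -/
theorem index_image_eq_of_exact_diagram
    {H G K : Type u} [Group H] [Group G] [Group K]
    (α : H →* G) (β : G →* K) (φ : H →* H) (ψ : G →* G) (ν : K →* K)
    (hφ : Function.Bijective φ)
    (hβsurj : Function.Surjective β) (hexact : α.range = β.ker)
    (hc1 : ψ.comp α = α.comp φ) (hc2 : ν.comp β = β.comp ψ) :
    Cardinal.mk (G ⧸ ψ.range) = Cardinal.mk (K ⧸ ν.range) := by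
  have hc1' : ∀ h, ψ (α h) = α (φ h) := fun h => DFunLike.congr_fun hc1 h
  have hc2' : ∀ g, ν (β g) = β (ψ g) := fun g => DFunLike.congr_fun hc2 g
  -- α.range ≤ ψ.range since ψ (α (φ⁻¹ h)) = α h
  have hαψ : α.range ≤ ψ.range := by
    rintro _ ⟨h, rfl⟩
    obtain ⟨h', rfl⟩ := hφ.2 h
    exact ⟨α h', hc1' h'⟩
  -- key: β g ∈ ν.range ↔ g ∈ ψ.range
  have key : ∀ g : G, β g ∈ ν.range ↔ g ∈ ψ.range := by
    intro g
    constructor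
    · rintro ⟨k, hk⟩
      obtain ⟨g', rfl⟩ := hβsurj k
      have h1 : β (g * (ψ g')⁻¹) = 1 := by
        simp [← hk, hc2' g']
      have h2 : g * (ψ g')⁻¹ ∈ α.range := by
        rw [hexact]; exact h1
      have h3 : g * (ψ g')⁻¹ ∈ ψ.range := hαψ h2
      have := mul_mem h3 (⟨g', rfl⟩ : ψ g' ∈ ψ.range)
      simpa using this
    · rintro ⟨g', rfl⟩
      exact ⟨β g', hc2' g'⟩
  apply Cardinal.mk_congr
  refine Equiv.ofBijective
    (Quotient.map' β (fun a b hab => ?_) : G ⧸ ψ.range → K ⧸ ν.range) ⟨?_, ?_⟩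
  · rw [QuotientGroup.leftRel_apply] at hab ⊢
    rw [← map_inv, ← map_mul]
    exact (key _).mpr hab
  · intro x y
    induction x using Quotient.inductionOn'
    induction y using Quotient.inductionOn'
    rename_i g₁ g₂
    intro hxy
    rw [Quotient.map'_mk'', Quotient.map'_mk'', Quotient.eq''] at hxy
    rw [Quotient.eq'']
    rw [QuotientGroup.leftRel_apply] at hxy ⊢
    rw [← map_inv, ← map_mul] at hxy
    exact (key _).mp hxy
  · intro x
    induction x using Quotient.inductionOn'
    rename_i k
    obtain ⟨g, rfl⟩ := hβsurj k
    exact ⟨Quotient.mk'' g, rfl⟩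
end

section
/- Let f = (h,g) be a skew-product covering map of 𝕋^{n-1} × 𝕋¹ preserving Haar measure, with h a measure-preserving homeomorphism of 𝕋^{n-1}. Then for every x ∈ 𝕋^{n-1}, the circle map g_x(t) = g(x,t) preserves the Haar (Lebesgue) measure λ on 𝕋¹. -/
open MeasureTheory
open scoped NNReal ENNReal

lemma cont_integrable_aux {α : Type*} [TopologicalSpace α] [CompactSpace α]
    [MeasurableSpace α] [OpensMeasurableSpace α] {μ : Measure α} [IsFiniteMeasure μ]
    {q : α → ℝ} (hq : Continuous q) : Integrable q μ :=
  hq.integrable_of_hasCompactSupport ((isClosed_tsupport q).isCompact)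

/-- If a skew-product covering map `f(x,t) = (h(x), g(x,t))` preserves Haar measure and
the base map `h` is a Haar-measure-preserving homeomorphism, then every fiber map
`g_x : 𝕋¹ → 𝕋¹` preserves Lebesgue (Haar) measure on the circle. -/
theorem fiber_maps_preserve_haar
    (m : ℕ)
    (h : (Fin m → AddCircle (1 : ℝ)) ≃ₜ (Fin m → AddCircle (1 : ℝ)))
    (g : (Fin m → AddCircle (1 : ℝ)) → AddCircle (1 : ℝ) → AddCircle (1 : ℝ))
    (f : (Fin m → AddCircle (1 : ℝ)) × AddCircle (1 : ℝ) →
         (Fin m → AddCircle (1 : ℝ)) × AddCircle (1 : ℝ))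
    (hf : ∀ x t, f (x, t) = (h x, g x t))
    (hcovf : IsCoveringMap f)
    (hpresh : MeasurePreserving h volume volume)
    (hpresf : MeasurePreserving f volume volume) :
    ∀ x, MeasurePreserving (g x) volume volume := by
  haveI : Fact ((0 : ℝ) < 1) := ⟨one_pos⟩
  haveI hPT : IsProbabilityMeasure (volume : Measure (AddCircle (1 : ℝ))) :=
    ⟨by simp [AddCircle.measure_univ]⟩
  haveI hPX : IsProbabilityMeasure (volume : Measure (Fin m → AddCircle (1 : ℝ))) := by
    rw [show (volume : Measure (Fin m → AddCircle (1 : ℝ)))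
      = Measure.pi (fun _ => volume) from rfl]
    infer_instance
  have hfc : Continuous f := hcovf.continuous
  have hfeq : ∀ p : (Fin m → AddCircle (1 : ℝ)) × AddCircle (1 : ℝ),
      f p = (h p.1, g p.1 p.2) := fun p => by rw [← hf p.1 p.2]
  have hgc : Continuous (fun p : (Fin m → AddCircle (1 : ℝ)) × AddCircle (1 : ℝ) =>
      g p.1 p.2) := by
    have e : (fun p : (Fin m → AddCircle (1 : ℝ)) × AddCircle (1 : ℝ) => g p.1 p.2)
        = fun p => (f p).2 := by funext p; rw [hfeq p]
    rw [e]; exact hfc.snd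
  have hgxc : ∀ x, Continuous (g x) := fun x => hgc.comp (Continuous.prodMk_right x)
  have hpresh' : MeasurePreserving h.toMeasurableEquiv volume volume := by
    refine ⟨h.toMeasurableEquiv.measurable, ?_⟩
    simpa [Homeomorph.toMeasurableEquiv_coe] using hpresh.map_eq
  have hint_h : ∀ q : (Fin m → AddCircle (1 : ℝ)) → ℝ, ∫ x, q (h x) = ∫ x, q x := by
    intro q
    simpa [Homeomorph.toMeasurableEquiv_coe] using
      hpresh'.integral_comp h.toMeasurableEquiv.measurableEmbedding q
  -- key: fiber integrals of continuous functions are constant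
  have key : ∀ φ : AddCircle (1 : ℝ) → ℝ, Continuous φ → ∀ x,
      ∫ t, φ (g x t) = ∫ t, φ t := by
    intro φ hφ
    set c : ℝ := ∫ t, φ t with hc
    set G : (Fin m → AddCircle (1 : ℝ)) → ℝ := fun x => ∫ t, φ (g x t) with hG
    have hGc : Continuous G := by
      obtain ⟨C, hC⟩ : ∃ C, ∀ t, ‖φ t‖ ≤ C := by
        obtain ⟨C, hC⟩ := (isCompact_univ.image hφ).isBounded.subset_closedBall 0
        exact ⟨C, fun t => by
          simpa [Metric.mem_closedBall, Real.norm_eq_abs, Real.dist_eq] using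
            hC ⟨t, trivial, rfl⟩⟩
      refine continuous_of_dominated
        (fun x => (hφ.comp (hgxc x)).aestronglyMeasurable)
        (fun x => Filter.Eventually.of_forall fun t => hC _)
        (integrable_const C) ?_
      refine Filter.Eventually.of_forall fun t => ?_
      exact hφ.comp (hgc.comp (continuous_id.prodMk continuous_const))
    have ident : ∀ ψ : (Fin m → AddCircle (1 : ℝ)) → ℝ, Continuous ψ →
        ∫ x, ψ (h x) * G x = (∫ x, ψ x) * c := by
      intro ψ hψ
      have hcont : Continuous (fun p : (Fin m → AddCircle (1 : ℝ)) × AddCircle (1 : ℝ) =>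
          ψ p.1 * φ p.2) := (hψ.comp continuous_fst).mul (hφ.comp continuous_snd)
      have hcont2 : Continuous (fun p : (Fin m → AddCircle (1 : ℝ)) × AddCircle (1 : ℝ) =>
          ψ (h p.1) * φ (g p.1 p.2)) :=
        (hψ.comp (h.continuous.comp continuous_fst)).mul (hφ.comp hgc)
      have hInt : Integrable (fun p : (Fin m → AddCircle (1 : ℝ)) × AddCircle (1 : ℝ) =>
          ψ (h p.1) * φ (g p.1 p.2)) volume := cont_integrable_aux hcont2
      have step1 : ∫ p : (Fin m → AddCircle (1 : ℝ)) × AddCircle (1 : ℝ),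
          ψ p.1 * φ p.2 = (∫ x, ψ x) * c := by
        rw [Measure.volume_eq_prod, integral_prod_mul]
      have step2 : (∫ p : (Fin m → AddCircle (1 : ℝ)) × AddCircle (1 : ℝ),
          ψ (h p.1) * φ (g p.1 p.2))
          = ∫ p : (Fin m → AddCircle (1 : ℝ)) × AddCircle (1 : ℝ), ψ p.1 * φ p.2 := by
        have efun : (fun p : (Fin m → AddCircle (1 : ℝ)) × AddCircle (1 : ℝ) =>
            ψ (h p.1) * φ (g p.1 p.2))
            = fun p => ψ ((f p).1) * φ ((f p).2) := funext fun p => by rw [hfeq p]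
        have hsm : AEStronglyMeasurable
            (fun p : (Fin m → AddCircle (1 : ℝ)) × AddCircle (1 : ℝ) => ψ p.1 * φ p.2)
            (Measure.map f volume) := by
          rw [hpresf.map_eq]; exact hcont.aestronglyMeasurable
        rw [efun]
        calc (∫ p : (Fin m → AddCircle (1 : ℝ)) × AddCircle (1 : ℝ),
              ψ ((f p).1) * φ ((f p).2))
            = ∫ p : (Fin m → AddCircle (1 : ℝ)) × AddCircle (1 : ℝ),
              ψ p.1 * φ p.2 ∂(Measure.map f volume) :=
              (integral_map hfc.aemeasurable hsm).symm
          _ = _ := by rw [hpresf.map_eq]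
      have step3 : (∫ p : (Fin m → AddCircle (1 : ℝ)) × AddCircle (1 : ℝ),
          ψ (h p.1) * φ (g p.1 p.2)) = ∫ x, ψ (h x) * G x := by
        rw [Measure.volume_eq_prod] at hInt ⊢
        rw [integral_prod _ hInt]
        congr 1; funext x
        simp [integral_const_mul, hG]
      rw [← step3, step2, step1]
    -- conclude G ≡ c
    have hIG : ∫ x, G (h.symm x) = ∫ x, G x := by
      have := hint_h (fun x => G (h.symm x))
      simpa using this.symm
    set IG : ℝ := ∫ x, G x with hIG'
    have hGsymmc : Continuous (fun x => G (h.symm x)) := hGc.comp h.symm.continuous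
    have hGsymmInt : Integrable (fun x : Fin m → AddCircle (1 : ℝ) => G (h.symm x)) volume :=
      cont_integrable_aux hGsymmc
    have hGInt : Integrable G volume := cont_integrable_aux hGc
    have hψ0c : Continuous (fun x => G (h.symm x) - c) := hGsymmc.sub continuous_const
    have e1 : ∫ x, (G x - c) * G x = (IG - c) * c := by
      have := ident (fun x => G (h.symm x) - c) hψ0c
      simp only [Homeomorph.symm_apply_apply] at this
      rw [this]
      congr 1
      rw [integral_sub hGsymmInt (integrable_const c), hIG, integral_const]
      have huniv : (volume (Set.univ : Set (Fin m → AddCircle (1 : ℝ)))) = 1 := measure_univ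
      simp [huniv]
    have e2 : ∫ x, (G x - c) * c = (IG - c) * c := by
      rw [integral_mul_const, integral_sub hGInt (integrable_const c), integral_const]
      have huniv : (volume (Set.univ : Set (Fin m → AddCircle (1 : ℝ)))) = 1 := measure_univ
      simp [huniv, hIG']
    have e3 : ∫ x, (G x - c) ^ 2 = 0 := by
      have ee : ∀ x, (G x - c) ^ 2 = (G x - c) * G x - (G x - c) * c := by
        intro x; ring
      simp_rw [ee]
      have i1 : Integrable (fun x : Fin m → AddCircle (1 : ℝ) => (G x - c) * G x) volume :=
        cont_integrable_aux ((hGc.sub continuous_const).mul hGc)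
      have i2 : Integrable (fun x : Fin m → AddCircle (1 : ℝ) => (G x - c) * c) volume :=
        cont_integrable_aux ((hGc.sub continuous_const).mul continuous_const)
      rw [integral_sub i1 i2, e1, e2, sub_self]
    have hsqInt : Integrable (fun x : Fin m → AddCircle (1 : ℝ) => (G x - c) ^ 2) volume :=
      cont_integrable_aux ((hGc.sub continuous_const).pow 2)
    have hae : (fun x => (G x - c) ^ 2) =ᵐ[(volume : Measure (Fin m → AddCircle (1 : ℝ)))]
        0 := (integral_eq_zero_iff_of_nonneg (fun x => sq_nonneg _) hsqInt).mp e3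
    have hsq : (fun x => (G x - c) ^ 2) = (0 : (Fin m → AddCircle (1 : ℝ)) → ℝ) :=
      (Continuous.ae_eq_iff_eq volume ((hGc.sub continuous_const).pow 2)
        continuous_const).mp hae
    intro x
    have hx0 : (G x - c) ^ 2 = 0 := congrFun hsq x
    have hx : G x - c = 0 := by
      have := sq_eq_zero_iff.mp hx0
      exact this
    have : G x = c := by linarith
    exact this
  -- conclude measure preservation of each fiber map
  intro x
  refine ⟨(hgxc x).measurable, ?_⟩
  haveI : IsFiniteMeasure (Measure.map (g x) volume) := by
    constructor
    rw [Measure.map_apply (hgxc x).measurable MeasurableSet.univ]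
    exact measure_lt_top _ _
  refine ext_of_forall_lintegral_eq_of_IsFiniteMeasure ?_
  intro φ
  have hφm : Measurable (fun t : AddCircle (1 : ℝ) => ((φ t : ℝ≥0) : ENNReal)) :=
    measurable_coe_nnreal_ennreal.comp φ.continuous.measurable
  rw [lintegral_map hφm (hgxc x).measurable]
  have hφr : Continuous (fun t : AddCircle (1 : ℝ) => (φ t : ℝ)) :=
    NNReal.continuous_coe.comp φ.continuous
  have hi1 : Integrable (fun t : AddCircle (1 : ℝ) => ((φ (g x t) : ℝ))) volume :=
    cont_integrable_aux (hφr.comp (hgxc x))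
  have hi2 : Integrable (fun t : AddCircle (1 : ℝ) => ((φ t : ℝ))) volume :=
    cont_integrable_aux hφr
  have h1 := lintegral_coe_eq_integral (fun t => φ (g x t)) hi1
  have h2 := lintegral_coe_eq_integral (fun t => φ t) hi2
  rw [h1, h2, key _ hφr x]
end

section
/- Let f: 𝕋^n → 𝕋^n be a measure-preserving (for Haar measure) covering map. Then f is not topologically transitive if and only if there exist open sets U, V ⊆ 𝕋^n with f^{-1}(U) = U, f^{-1}(V) = V, and U equal to the interior of 𝕋^n \ V. -/
open MeasureTheory

private lemma iter_mem_of_invariant {X : Type*} {f : X → X} {S : Set X}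
    (hS : f ⁻¹' S = S) : ∀ j x, x ∈ S → f^[j] x ∈ S := by
  intro j
  induction j with
  | zero => intro x hx; simpa using hx
  | succ j ih =>
    intro x hx
    rw [Function.iterate_succ_apply']
    have h : f^[j] x ∈ S := ih x hx
    rw [← hS] at h
    exact h

/-- A Haar-measure-preserving covering map of `𝕋ⁿ` is not topologically transitive
iff there are (nonempty) open invariant regions `U`, `V` with `U` equal to the
interior of the complement of `V`. -/
theorem not_transitive_iff_invariant_regions
    (n : ℕ)
    (f : (Fin n → AddCircle (1 : ℝ)) → (Fin n → AddCircle (1 : ℝ)))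
    (hcov : IsCoveringMap f)
    (hpres : MeasurePreserving f volume volume) :
    (¬ ∃ z, Dense (Set.range fun k : ℕ => f^[k] z)) ↔
      ∃ U V : Set (Fin n → AddCircle (1 : ℝ)),
        IsOpen U ∧ IsOpen V ∧ U.Nonempty ∧ V.Nonempty ∧
        f ⁻¹' U = U ∧ f ⁻¹' V = V ∧ U = interior Vᶜ := by
  have hcont : Continuous f := hcov.continuous
  have hopen : IsOpenMap f := hcov.isOpenMap
  constructor
  · intro hnd
    -- Step 1: find nonempty open A, B with all iterated preimages of A disjoint from B
    have key : ∃ A B : Set (Fin n → AddCircle (1 : ℝ)), IsOpen A ∧ IsOpen B ∧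
        A.Nonempty ∧ B.Nonempty ∧ ∀ k : ℕ, f^[k] ⁻¹' A ∩ B = ∅ := by
      by_contra hcon
      push_neg at hcon
      apply hnd
      obtain ⟨b, hbc, hbne, hbasis⟩ :=
        TopologicalSpace.exists_countable_basis (Fin n → AddCircle (1 : ℝ))
      have : Countable b := hbc.to_subtype
      have hdense : Dense (⋂ B : b, ⋃ k : ℕ, f^[k] ⁻¹' (B : Set (Fin n → AddCircle (1 : ℝ)))) := by
        apply dense_iInter_of_isOpen
        · intro B
          exact isOpen_iUnion fun k => (hcont.iterate k).isOpen_preimage _ (hbasis.isOpen B.2)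
        · intro B
          rw [dense_iff_inter_open]
          intro t ht htne
          have hBo : IsOpen (B : Set (Fin n → AddCircle (1 : ℝ))) := hbasis.isOpen B.2
          have hBne : (B : Set (Fin n → AddCircle (1 : ℝ))).Nonempty := by
            rcases Set.eq_empty_or_nonempty (B : Set (Fin n → AddCircle (1 : ℝ))) with h | h
            · exact absurd (h ▸ B.2) hbne
            · exact h
          obtain ⟨k, hk⟩ := hcon (B : Set (Fin n → AddCircle (1 : ℝ))) t hBo ht hBne htne
          obtain ⟨x, hx⟩ := hk
          exact ⟨x, hx.2, Set.mem_iUnion.2 ⟨k, hx.1⟩⟩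
      obtain ⟨z, hz⟩ := hdense.nonempty
      refine ⟨z, hbasis.dense_iff.2 fun o ho hone => ?_⟩
      have h := Set.mem_iInter.1 hz ⟨o, ho⟩
      obtain ⟨k, hk⟩ := Set.mem_iUnion.1 h
      exact ⟨f^[k] z, hk, Set.mem_range_self k⟩
    obtain ⟨A, B, hAo, hBo, hAne, hBne, hAB⟩ := key
    set W : Set (Fin n → AddCircle (1 : ℝ)) := ⋃ k : ℕ, f^[k] ⁻¹' A with hW
    have hWo : IsOpen W := isOpen_iUnion fun k => (hcont.iterate k).isOpen_preimage _ hAo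
    have hAW : A ⊆ W := by
      intro x hx; exact Set.mem_iUnion.2 ⟨0, by simpa using hx⟩
    have hpreW : f ⁻¹' W ⊆ W := by
      rw [hW, Set.preimage_iUnion]
      refine Set.iUnion_subset fun k => ?_
      intro x hx
      exact Set.mem_iUnion.2 ⟨k + 1, by
        simpa [Function.iterate_succ, Set.preimage_comp] using hx⟩
    have hpreWo : IsOpen (f ⁻¹' W) := hWo.preimage hcont
    -- the difference has measure zero
    have hmeas0 : volume (W \ f ⁻¹' W) = 0 := by
      have h1 : volume (f ⁻¹' W) = volume W :=
        hpres.measure_preimage hWo.measurableSet.nullMeasurableSet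
      have h2 : volume (W \ f ⁻¹' W) = volume W - volume (f ⁻¹' W) :=
        measure_diff hpreW hpreWo.measurableSet.nullMeasurableSet (measure_ne_top _ _)
      rw [h2, h1, tsub_self]
    -- hence the closures agree
    have hclW : closure (f ⁻¹' W) = closure W := by
      refine subset_antisymm (closure_mono hpreW) (closure_mono ?_ |>.trans closure_closure.subset)
      -- W ⊆ closure (f ⁻¹' W)
      intro x hx
      by_contra hxc
      have hOo : IsOpen (W ∩ (closure (f ⁻¹' W))ᶜ) := hWo.inter isClosed_closure.isOpen_compl
      have hOne : (W ∩ (closure (f ⁻¹' W))ᶜ).Nonempty := ⟨x, hx, hxc⟩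
      have hpos : 0 < volume (W ∩ (closure (f ⁻¹' W))ᶜ) := hOo.measure_pos (volume : Measure (Fin n → AddCircle (1 : ℝ))) hOne
      have hsub : W ∩ (closure (f ⁻¹' W))ᶜ ⊆ W \ f ⁻¹' W := fun y hy =>
        ⟨hy.1, fun hyf => hy.2 (subset_closure hyf)⟩
      have hle := measure_mono (μ := (volume : Measure (Fin n → AddCircle (1 : ℝ)))) hsub
      rw [hmeas0] at hle
      exact absurd (le_antisymm hle zero_le) (ne_of_gt hpos)
    refine ⟨interior (closure W), (closure W)ᶜ, isOpen_interior,
      isClosed_closure.isOpen_compl, ?_, ?_, ?_, ?_, ?_⟩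
    · exact hAne.mono (hAW.trans (hWo.subset_interior_iff.2 subset_closure))
    · -- B is disjoint from closure W
      refine hBne.mono fun y hy => ?_
      intro hyc
      have hBW : B ∩ W = ∅ := by
        rw [Set.eq_empty_iff_forall_notMem]
        rintro z ⟨hzB, hzW⟩
        rw [hW] at hzW
        obtain ⟨k, hk⟩ := Set.mem_iUnion.1 hzW
        have hzz : z ∈ f^[k] ⁻¹' A ∩ B := ⟨hk, hzB⟩
        rw [hAB k] at hzz
        exact hzz
      have h := hBo.inter_closure ⟨hy, hyc⟩
      rw [hBW] at h
      simp at h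
    · rw [hopen.preimage_interior_eq_interior_preimage hcont,
        hopen.preimage_closure_eq_closure_preimage hcont, hclW]
    · rw [Set.preimage_compl, hopen.preimage_closure_eq_closure_preimage hcont, hclW]
    · rw [compl_compl]
  · rintro ⟨U, V, hUo, hVo, hUne, hVne, hUf, hVf, hUV⟩ ⟨z, hz⟩
    have hdisj : U ∩ V = ∅ := by
      rw [Set.eq_empty_iff_forall_notMem]
      rintro x ⟨hxU, hxV⟩
      have hx : x ∈ Vᶜ := interior_subset (hUV ▸ hxU)
      exact hx hxV
    obtain ⟨_, hk', k, rfl⟩ := (dense_iff_inter_open.1 hz) U hUo hUne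
    obtain ⟨_, hm', m, rfl⟩ := (dense_iff_inter_open.1 hz) V hVo hVne
    have hkU : f^[k] z ∈ U := hk'
    have hmV : f^[m] z ∈ V := hm'
    have hNU : f^[max k m] z ∈ U := by
      have h : f^[max k m] z = f^[max k m - k] (f^[k] z) := by
        rw [← Function.iterate_add_apply, Nat.sub_add_cancel (le_max_left k m)]
      rw [h]
      exact iter_mem_of_invariant hUf _ _ hkU
    have hNV : f^[max k m] z ∈ V := by
      have h : f^[max k m] z = f^[max k m - m] (f^[m] z) := by
        rw [← Function.iterate_add_apply, Nat.sub_add_cancel (le_max_right k m)]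
      rw [h]
      exact iter_mem_of_invariant hVf _ _ hmV
    have hmem : f^[max k m] z ∈ U ∩ V := ⟨hNU, hNV⟩
    rw [hdisj] at hmem
    exact hmem
end

section
/- Let f: 𝕋^n → 𝕋^n be a skew-product f = (h,g) with h a transitive homeomorphism of 𝕋^{n-1}, and suppose each fiber map satisfies: for every x ∈ 𝕋^{n-1} and every interval I ⊂ 𝕋¹, there exists k ≥ 0 such that the image of {x} × I under f^k is the whole fiber {h^k(x)} × 𝕋¹, with k depending only on the length of I. Then f is topologically transitive. -/
open Set

/-- In a second countable, nonempty Baire space, topological transitivity of a continuous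
map yields a point with dense forward orbit. -/
theorem aux_baire_dense_orbit {α : Type*} [TopologicalSpace α] [BaireSpace α]
    [SecondCountableTopology α] [Nonempty α]
    (f : α → α) (hf : Continuous f)
    (H : ∀ U V : Set α, IsOpen U → U.Nonempty → IsOpen V → V.Nonempty →
      ∃ N : ℕ, (U ∩ f^[N] ⁻¹' V).Nonempty) :
    ∃ z, Dense (Set.range fun k : ℕ => f^[k] z) := by
  obtain ⟨b, hbc, hbne, hbb⟩ := TopologicalSpace.exists_countable_basis α
  have hG : Dense (⋂ V ∈ b, ⋃ n : ℕ, f^[n] ⁻¹' V) := by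
    refine dense_biInter_of_isOpen
      (fun V hV => isOpen_iUnion fun n => (hbb.isOpen hV).preimage (hf.iterate n)) hbc
      (fun V hV => ?_)
    rw [dense_iff_inter_open]
    intro U hU hUne
    have hVne : V.Nonempty := by
      rcases Set.eq_empty_or_nonempty V with h' | h'
      · exact absurd (h' ▸ hV) hbne
      · exact h'
    obtain ⟨N, z, hzU, hzV⟩ := H U V hU hUne (hbb.isOpen hV) hVne
    exact ⟨z, hzU, Set.mem_iUnion.2 ⟨N, hzV⟩⟩
  obtain ⟨z, hz⟩ := hG.nonempty
  refine ⟨z, hbb.dense_iff.2 fun o ho hone => ?_⟩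
  have : z ∈ ⋃ n : ℕ, f^[n] ⁻¹' o := (Set.mem_iInter₂.1 hz) o ho
  obtain ⟨n, hn⟩ := Set.mem_iUnion.1 this
  exact ⟨f^[n] z, hn, ⟨n, rfl⟩⟩

/-- Every open set of the circle containing a point contains the image of an open
interval of positive length containing that point. -/
theorem aux_circle_interval {W : Set (AddCircle (1 : ℝ))} (hW : IsOpen W)
    {t : AddCircle (1 : ℝ)} (ht : t ∈ W) :
    ∃ a b : ℝ, a < b ∧ t ∈ (fun r : ℝ => (r : AddCircle (1 : ℝ))) '' Set.Ioo a b ∧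
      (fun r : ℝ => (r : AddCircle (1 : ℝ))) '' Set.Ioo a b ⊆ W := by
  obtain ⟨r, -, rfl⟩ := AddCircle.eq_coe_Ico t
  have hcoe : Continuous (fun r : ℝ => (r : AddCircle (1 : ℝ))) := continuous_quotient_mk'
  have hpre : IsOpen ((fun r : ℝ => (r : AddCircle (1 : ℝ))) ⁻¹' W) := hW.preimage hcoe
  obtain ⟨δ, hδ, hball⟩ := Metric.isOpen_iff.1 hpre r ht
  rw [Real.ball_eq_Ioo] at hball
  refine ⟨r - δ, r + δ, by linarith, ⟨r, ⟨by linarith, by linarith⟩, rfl⟩, ?_⟩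
  exact Set.image_subset_iff.2 hball

/-- The image of `Ioo 0 (1/2)` in the circle of circumference 1 is not everything. -/
theorem aux_circle_not_univ :
    (fun r : ℝ => (r : AddCircle (1 : ℝ))) '' Set.Ioo (0 : ℝ) (1 / 2) ≠ Set.univ := by
  intro hcon
  have : ((3 / 4 : ℝ) : AddCircle (1 : ℝ)) ∈
      (fun r : ℝ => (r : AddCircle (1 : ℝ))) '' Set.Ioo (0 : ℝ) (1 / 2) := by
    rw [hcon]; trivial
  obtain ⟨r, hr, hre⟩ := this
  have h1 : r ∈ Set.Ico (0 : ℝ) (0 + 1) := ⟨hr.1.le, by simpa using hr.2.trans (by norm_num)⟩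
  have h2 : (3 / 4 : ℝ) ∈ Set.Ico (0 : ℝ) (0 + 1) := by constructor <;> norm_num
  have := (AddCircle.coe_eq_coe_iff_of_mem_Ico (p := (1 : ℝ)) (a := 0) h1 h2).1 hre
  have := hr.2
  linarith

/-- Let `f = (h, g)` be a skew-product on `𝕋^{n-1} × 𝕋¹` with `h` a transitive
homeomorphism, and suppose that for every interval length `ε > 0` there is a uniform
time `k` after which the `f`-iterate of any fiber segment `{x} × I` (with `I` an
interval of length at least `ε`) covers the whole fiber. Then `f` is transitive. -/
theorem skew_product_transitive_of_uniform_fiber_covering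
    (m : ℕ)
    (h : (Fin m → AddCircle (1 : ℝ)) ≃ₜ (Fin m → AddCircle (1 : ℝ)))
    (g : (Fin m → AddCircle (1 : ℝ)) → AddCircle (1 : ℝ) → AddCircle (1 : ℝ))
    (f : (Fin m → AddCircle (1 : ℝ)) × AddCircle (1 : ℝ) →
         (Fin m → AddCircle (1 : ℝ)) × AddCircle (1 : ℝ))
    (hf : ∀ x t, f (x, t) = (h x, g x t))
    (hcont : Continuous f)
    (htrans : ∃ x, Dense (Set.range fun k : ℕ => (⇑h)^[k] x))
    (hfibers : ∀ ε : ℝ, 0 < ε → ∃ k : ℕ,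
      ∀ (x : Fin m → AddCircle (1 : ℝ)) (a b : ℝ), ε ≤ b - a →
        (fun t : AddCircle (1 : ℝ) => (f^[k] (x, t)).2) ''
            ((fun r : ℝ => (r : AddCircle (1 : ℝ))) '' Set.Ioo a b) = Set.univ) :
    ∃ z, Dense (Set.range fun k : ℕ => f^[k] z) := by
  classical
  -- iterate formula
  have hiter : ∀ (n : ℕ) (x : Fin m → AddCircle (1 : ℝ)) (t : AddCircle (1 : ℝ)),
      f^[n] (x, t) = ((⇑h)^[n] x, (f^[n] (x, t)).2) := by
    intro n
    induction n with
    | zero => intro x t; simp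
    | succ n ih =>
      intro x t
      rw [Function.iterate_succ_apply', ih x t, Function.iterate_succ_apply']
      rw [hf]
  -- recurrence for second coordinate
  have hrec : ∀ (n : ℕ) (x : Fin m → AddCircle (1 : ℝ)) (t : AddCircle (1 : ℝ)),
      (f^[n + 1] (x, t)).2 = g ((⇑h)^[n] x) ((f^[n] (x, t)).2) := by
    intro n x t
    conv_lhs => rw [Function.iterate_succ_apply', hiter n x t, hf]
  -- additivity
  have hadd : ∀ (n k : ℕ) (x : Fin m → AddCircle (1 : ℝ)) (t : AddCircle (1 : ℝ)),
      (f^[n + k] (x, t)).2 = (f^[n] ((⇑h)^[k] x, (f^[k] (x, t)).2)).2 := by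
    intro n k x t
    rw [Function.iterate_add_apply f n k, hiter k x t]
  -- every fiber map is surjective
  have hg : ∀ y, Function.Surjective (g y) := by
    obtain ⟨k, hk⟩ := hfibers (1 / 2) (by norm_num)
    have hk0 : k ≠ 0 := by
      intro hk0
      subst hk0
      have := hk (fun _ => 0) 0 (1 / 2) (by norm_num)
      simp only [Function.iterate_zero, id_eq] at this
      rw [Set.image_id'] at this
      exact aux_circle_not_univ this
    intro y
    obtain ⟨k', rfl⟩ : ∃ k', k = k' + 1 :=
      ⟨k - 1, (Nat.succ_pred_eq_of_pos (Nat.pos_of_ne_zero hk0)).symm⟩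
    set x := (⇑h.symm)^[k'] y with hx
    have hxy : (⇑h)^[k'] x = y := Function.LeftInverse.iterate h.apply_symm_apply k' y
    have hsurj : Function.Surjective (fun t : AddCircle (1 : ℝ) => (f^[k' + 1] (x, t)).2) := by
      intro s
      have himg := hk x 0 (1 / 2) (by norm_num)
      have : s ∈ (fun t : AddCircle (1 : ℝ) => (f^[k' + 1] (x, t)).2) ''
          ((fun r : ℝ => (r : AddCircle (1 : ℝ))) '' Set.Ioo 0 (1 / 2)) := by
        rw [himg]; trivial
      obtain ⟨t, -, ht⟩ := this
      exact ⟨t, ht⟩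
    intro s
    obtain ⟨t, ht⟩ := hsurj s
    change (f^[k' + 1] (x, t)).2 = s at ht
    rw [hrec k' x t, hxy] at ht
    exact ⟨_, ht⟩
  -- surjectivity of all fiber iterates
  have hp : ∀ (n : ℕ) (x : Fin m → AddCircle (1 : ℝ)),
      Function.Surjective (fun t : AddCircle (1 : ℝ) => (f^[n] (x, t)).2) := by
    intro n
    induction n with
    | zero => intro x s; exact ⟨s, by simp⟩
    | succ n ih =>
      intro x s
      obtain ⟨s', hs'⟩ := hg ((⇑h)^[n] x) s
      obtain ⟨t, ht⟩ := ih x s'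
      change (f^[n] (x, t)).2 = s' at ht
      refine ⟨t, ?_⟩
      show (f^[n + 1] (x, t)).2 = s
      rw [hrec n x t, ht, hs']
  -- iterates of h
  have hHsurj : ∀ n : ℕ, Function.Surjective ((⇑h)^[n]) := fun n s =>
    ⟨(⇑h.symm)^[n] s, Function.LeftInverse.iterate h.apply_symm_apply n s⟩
  have hHcont : ∀ n : ℕ, Continuous ((⇑h)^[n]) := fun n => h.continuous.iterate n
  have hHopen : ∀ (n : ℕ) (B : Set (Fin m → AddCircle (1 : ℝ))), IsOpen B →
      IsOpen ((⇑h)^[n] '' B) := by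
    intro n
    induction n with
    | zero => intro B hB; simpa [Set.image_id] using hB
    | succ n ih =>
      intro B hB
      rw [Function.iterate_succ', Set.image_comp]
      exact h.isOpenMap _ (ih B hB)
  -- base transitivity with one-sided order
  obtain ⟨w, hw⟩ := htrans
  have hbase : ∀ W₁ W₂ : Set (Fin m → AddCircle (1 : ℝ)),
      IsOpen W₁ → W₁.Nonempty → IsOpen W₂ → W₂.Nonempty →
      ∃ x ∈ W₁, ∃ n : ℕ, (⇑h)^[n] x ∈ W₂ := by
    intro W₁ W₂ h₁ h₁n h₂ h₂n
    obtain ⟨_, ⟨i, rfl⟩, hiW⟩ := hw.exists_mem_open h₁ h₁n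
    refine ⟨(⇑h)^[i] w, hiW, ?_⟩
    have hdi : Dense (Set.range fun j : ℕ => (⇑h)^[j] ((⇑h)^[i] w)) := by
      have heq : (Set.range fun j : ℕ => (⇑h)^[j] ((⇑h)^[i] w)) =
          (⇑h)^[i] '' (Set.range fun j : ℕ => (⇑h)^[j] w) := by
        have hcomm : ∀ j : ℕ, (⇑h)^[j] ((⇑h)^[i] w) = (⇑h)^[i] ((⇑h)^[j] w) := by
          intro j
          rw [← Function.iterate_add_apply, ← Function.iterate_add_apply, Nat.add_comm]
        ext z
        constructor
        · rintro ⟨j, rfl⟩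
          exact ⟨(⇑h)^[j] w, ⟨j, rfl⟩, (hcomm j).symm⟩
        · rintro ⟨-, ⟨j, rfl⟩, rfl⟩
          exact ⟨j, hcomm j⟩
      rw [heq, dense_iff_inter_open]
      intro U hU hUne
      have hpreo : IsOpen ((⇑h)^[i] ⁻¹' U) := hU.preimage (hHcont i)
      have hprene : ((⇑h)^[i] ⁻¹' U).Nonempty := by
        obtain ⟨u, hu⟩ := hUne
        obtain ⟨v, rfl⟩ := hHsurj i u
        exact ⟨v, hu⟩
      obtain ⟨z, hz1, hz2⟩ := hw.exists_mem_open hpreo hprene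
      exact ⟨(⇑h)^[i] z, hz2, Set.mem_image_of_mem _ hz1⟩
    obtain ⟨_, ⟨n, rfl⟩, hnW⟩ := hdi.exists_mem_open h₂ h₂n
    exact ⟨n, hnW⟩
  -- topological transitivity of f
  have Htrans : ∀ U V : Set ((Fin m → AddCircle (1 : ℝ)) × AddCircle (1 : ℝ)),
      IsOpen U → U.Nonempty → IsOpen V → V.Nonempty →
      ∃ N : ℕ, (U ∩ f^[N] ⁻¹' V).Nonempty := by
    intro U V hU hUne hV hVne
    obtain ⟨⟨x₀, t₀⟩, hU0⟩ := hUne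
    obtain ⟨⟨x₁, t₁⟩, hV0⟩ := hVne
    obtain ⟨B, W, hB, hW, hxB, htW, hBWU⟩ := isOpen_prod_iff.1 hU x₀ t₀ hU0
    obtain ⟨B', W', hB', hW', hxB', htW', hBWV⟩ := isOpen_prod_iff.1 hV x₁ t₁ hV0
    obtain ⟨a, b, hab, htI, hIW⟩ := aux_circle_interval hW htW
    obtain ⟨k, hk⟩ := hfibers (b - a) (by linarith)
    obtain ⟨y, hy, n, hn⟩ := hbase ((⇑h)^[k] '' B) B' (hHopen k B hB)
      (⟨_, Set.mem_image_of_mem _ hxB⟩) hB' ⟨x₁, hxB'⟩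
    obtain ⟨x, hxBmem, rfl⟩ := hy
    -- find the point in the fiber
    obtain ⟨s, hs⟩ := hp n ((⇑h)^[k] x) t₁
    change (f^[n] ((⇑h)^[k] x, s)).2 = t₁ at hs
    have himg := hk x a b le_rfl
    have : s ∈ (fun t : AddCircle (1 : ℝ) => (f^[k] (x, t)).2) ''
        ((fun r : ℝ => (r : AddCircle (1 : ℝ))) '' Set.Ioo a b) := by rw [himg]; trivial
    obtain ⟨t, htmem, hts⟩ := this
    change (f^[k] (x, t)).2 = s at hts
    refine ⟨n + k, (x, t), hBWU ⟨hxBmem, hIW htmem⟩, ?_⟩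
    have hfst : (f^[n + k] (x, t)).1 = (⇑h)^[n] ((⇑h)^[k] x) := by
      rw [hiter (n + k) x t]
      simp only
      rw [Function.iterate_add_apply]
    have hsnd : (f^[n + k] (x, t)).2 = t₁ := by
      rw [hadd n k x t, hts, hs]
    show f^[n + k] (x, t) ∈ V
    have hval : f^[n + k] (x, t) = ((⇑h)^[n] ((⇑h)^[k] x), t₁) := by
      rw [← hfst, ← hsnd]
    rw [hval]
    exact hBWV ⟨hn, htW'⟩
  exact aux_baire_dense_orbit f hcont Htrans
end
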